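/- Let a_1 < ... < a_n be integers, f ∈ ℤ[x], and suppose f(a_i) ∈ {1, −1} for all i and f(a_1) ≠ f(a_j) for some j with 1 < j < n. If f(a_1) = f(a_n), then (a_j − a_1)(a_n − a_j) ≤ 2. -/

import Mathlib

open Polynomial

/-- Let `a 0 < ⋯ < a n` be integers, `f ∈ ℤ[x]` with `f(a i) ∈ {1, -1}` for all `i`, and
suppose `f(a 0) ≠ f(a j)` for some `0 < j < n` while `f(a 0) = f(a n)`. Then
`(a j - a 0)(a n - a j) ≤ 2`. -/
theorem stmt_12 (n : ℕ) (a : Fin (n + 1) → ℤ) (ha : StrictMono a) (f : ℤ[X])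
    (hf : ∀ i, f.eval (a i) = 1 ∨ f.eval (a i) = -1)
    (j : Fin (n + 1)) (hj0 : 0 < j) (hjn : j < Fin.last n)
    (hne : f.eval (a 0) ≠ f.eval (a j))
    (heq : f.eval (a 0) = f.eval (a (Fin.last n))) :
    (a j - a 0) * (a (Fin.last n) - a j) ≤ 2 := by
  set ε := f.eval (a 0) with hε
  have h0j : a 0 < a j := ha hj0
  have hjN : a j < a (Fin.last n) := ha hjn
  have h1 : (X - C (a 0)) ∣ (f - C ε) := by
    rw [dvd_iff_isRoot]
    simp [IsRoot]
    exact sub_self _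
  obtain ⟨q, hq⟩ := h1
  have hqn : q.eval (a (Fin.last n)) = 0 := by
    have h := congrArg (Polynomial.eval (a (Fin.last n))) hq
    simp only [eval_sub, eval_mul, eval_X, eval_C] at h
    rw [← heq] at h
    have : (a (Fin.last n) - a 0) * q.eval (a (Fin.last n)) = 0 := by linarith
    rcases mul_eq_zero.1 this with h' | h'
    · omega
    · exact h'
  obtain ⟨r, hr⟩ := dvd_iff_isRoot.2 hqn
  have key : f.eval (a j) - ε = (a j - a 0) * ((a j - a (Fin.last n)) * r.eval (a j)) := by
    have h := congrArg (Polynomial.eval (a j)) hq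
    simp only [hr, eval_sub, eval_mul, eval_X, eval_C] at h
    linarith
  have hval : f.eval (a j) - ε = 2 ∨ f.eval (a j) - ε = -2 := by
    rcases hf 0 with h0 | h0 <;> rcases hf j with hj | hj <;> omega
  have hdvd : (a j - a 0) * (a (Fin.last n) - a j) ∣ 2 := by
    have : (a j - a 0) * (a (Fin.last n) - a j) ∣ (ε - f.eval (a j)) := by
      refine ⟨r.eval (a j), ?_⟩
      have := key
      ring_nf
      ring_nf at this
      linarith
    rcases hval with h | h
    · rw [show ε - f.eval (a j) = -2 by omega] at this
      exact (dvd_neg.1 this)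
    · rw [show ε - f.eval (a j) = 2 by omega] at this
      exact this
  exact Int.le_of_dvd (by norm_num) hdvd
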